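/- Fix N ≥ 1, k ≥ 1 and λ ≥ 0. Let (U_i)_{i ∈ I} be a finite family of unitaries in U(N) with weights p_i ≥ 0 summing to 1 (an ensemble ν), and set G = Σᵢ p_i · U_i^{⊗k,k} and G_H = ∫ U^{⊗k,k} dμ_H(U) where μ_H is the Haar probability measure on U(N). If ‖G − G_H‖ ≤ λ in the ℓ²→ℓ² operator norm, then for every m ≥ 1, ‖G^m − G_H‖ ≤ λ^m. (G^m is the k,k-moment operator of the m-fold iterated ensemble; the paper deduces that the iterated ensemble is an N^{2k}·λ^m-approximate unitary k-design in trace norm.) -/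

import Mathlib

open Matrix MeasureTheory Kronecker

/-- The `k`-fold tensor power of an `N × N` matrix, as a matrix indexed by tuples. -/
noncomputable def tensorPow (N k : ℕ) (U : Matrix (Fin N) (Fin N) ℂ) :
    Matrix (Fin k → Fin N) (Fin k → Fin N) ℂ :=
  Matrix.of fun x y => ∏ i, U (x i) (y i)

/-- `U^{⊗k,k} = U^{⊗k} ⊗ (conj U)^{⊗k}`. -/
noncomputable def tensorPowKK (N k : ℕ) (U : Matrix (Fin N) (Fin N) ℂ) :
    Matrix ((Fin k → Fin N) × (Fin k → Fin N)) ((Fin k → Fin N) × (Fin k → Fin N)) ℂ :=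
  tensorPow N k U ⊗ₖ tensorPow N k (U.map (starRingEnd ℂ))

lemma tensorPow_mul (N k : ℕ) (A B : Matrix (Fin N) (Fin N) ℂ) :
    tensorPow N k (A * B) = tensorPow N k A * tensorPow N k B := by
  ext x y
  show (∏ i, (A * B) (x i) (y i)) = ∑ z : Fin k → Fin N, (∏ i, A (x i) (z i)) * ∏ i, B (z i) (y i)
  simp only [Matrix.mul_apply]
  rw [Finset.prod_univ_sum, Fintype.piFinset_univ]
  exact Finset.sum_congr rfl fun z _ => Finset.prod_mul_distrib

lemma tensorPowKK_mul (N k : ℕ) (A B : Matrix (Fin N) (Fin N) ℂ) :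
    tensorPowKK N k (A * B) = tensorPowKK N k A * tensorPowKK N k B := by
  unfold tensorPowKK
  rw [Matrix.map_mul, tensorPow_mul, tensorPow_mul, ← Matrix.mul_kronecker_mul]

lemma continuous_tensorPowKK_entry (N k : ℕ)
    (a b : (Fin k → Fin N) × (Fin k → Fin N)) :
    Continuous fun V : Matrix.unitaryGroup (Fin N) ℂ =>
      tensorPowKK N k (V : Matrix (Fin N) (Fin N) ℂ) a b := by
  have hent : ∀ i j : Fin N, Continuous fun V : Matrix.unitaryGroup (Fin N) ℂ =>
      (V : Matrix (Fin N) (Fin N) ℂ) i j := fun i j => by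
    exact (continuous_apply j).comp ((continuous_apply i).comp continuous_subtype_val)
  unfold tensorPowKK tensorPow
  simp only [Matrix.kroneckerMap_apply, Matrix.of_apply, Matrix.map_apply]
  exact (continuous_finset_prod _ fun i _ => hent _ _).mul
    (continuous_finset_prod _ fun i _ => (hent _ _).star)

instance unitaryGroup_compactSpace (N : ℕ) :
    CompactSpace (Matrix.unitaryGroup (Fin N) ℂ) := by
  apply isCompact_iff_compactSpace.mp
  have hclosed : IsClosed ((Matrix.unitaryGroup (Fin N) ℂ : Set (Matrix (Fin N) (Fin N) ℂ))) := by
    have : (Matrix.unitaryGroup (Fin N) ℂ : Set (Matrix (Fin N) (Fin N) ℂ)) =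
        {A | star A * A = 1} ∩ {A | A * star A = 1} := by
      ext A; exact Unitary.mem_iff
    rw [this]
    exact (isClosed_eq (continuous_id.matrix_conjTranspose.matrix_mul continuous_id)
        continuous_const).inter
      (isClosed_eq (continuous_id.matrix_mul continuous_id.matrix_conjTranspose) continuous_const)
  have hsub : (Matrix.unitaryGroup (Fin N) ℂ : Set (Matrix (Fin N) (Fin N) ℂ)) ⊆
      (Set.pi Set.univ fun _ : Fin N => Set.pi Set.univ fun _ : Fin N =>
        Metric.closedBall (0 : ℂ) 1) := by
    intro A hA i _ j _
    simp only [Metric.mem_closedBall, dist_zero_right]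
    have h1 : (A * star A) i i = 1 := by rw [(Unitary.mem_iff.mp hA).2]; simp [Matrix.one_apply]
    have h2 : ∑ j, Complex.normSq (A i j) = 1 := by
      rw [Matrix.mul_apply] at h1
      have : ((∑ j, (Complex.normSq (A i j) : ℂ))) = 1 := by
        rw [← h1]; congr 1; ext j
        simp [Matrix.conjTranspose_apply, Complex.mul_conj]
      exact_mod_cast (by exact_mod_cast this)
    have : Complex.normSq (A i j) ≤ 1 := by
      rw [← h2]
      exact Finset.single_le_sum (fun j _ => Complex.normSq_nonneg _) (Finset.mem_univ j)
    nlinarith [Complex.sq_norm (A i j), norm_nonneg (A i j)]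
  exact (isCompact_univ_pi fun i => isCompact_univ_pi fun j =>
    ProperSpace.isCompact_closedBall 0 1).of_isClosed_subset hclosed hsub

instance unitaryGroup_topologicalGroup (N : ℕ) :
    IsTopologicalGroup (Matrix.unitaryGroup (Fin N) ℂ) where
  continuous_mul := by
    apply Continuous.subtype_mk
    exact (continuous_subtype_val.comp continuous_fst).matrix_mul
      (continuous_subtype_val.comp continuous_snd)
  continuous_inv := by
    apply Continuous.subtype_mk
    exact continuous_subtype_val.matrix_conjTranspose

/-- If the `k,k`-moment operator `G` of an ensemble satisfies `‖G − G_H‖ ≤ λ` in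
ℓ²→ℓ² operator norm, then `‖G^m − G_H‖ ≤ λ^m` for every `m ≥ 1`. -/
theorem iterated_tpe_gap (N k : ℕ) (hN : 1 ≤ N) (hk : 1 ≤ k)
    (lam : ℝ) (hlam : 0 ≤ lam)
    [MeasurableSpace (Matrix.unitaryGroup (Fin N) ℂ)]
    [BorelSpace (Matrix.unitaryGroup (Fin N) ℂ)]
    (μH : Measure (Matrix.unitaryGroup (Fin N) ℂ))
    [μH.IsHaarMeasure] [IsProbabilityMeasure μH]
    {ι : Type} [Fintype ι]
    (U : ι → Matrix.unitaryGroup (Fin N) ℂ)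
    (p : ι → ℝ) (hp : ∀ i, 0 ≤ p i) (hp1 : ∑ i, p i = 1)
    (G GH : Matrix ((Fin k → Fin N) × (Fin k → Fin N))
      ((Fin k → Fin N) × (Fin k → Fin N)) ℂ)
    (hG : G = ∑ i, (p i : ℂ) • tensorPowKK N k ((U i : Matrix (Fin N) (Fin N) ℂ)))
    (hGH : ∀ a b, GH a b =
      ∫ V : Matrix.unitaryGroup (Fin N) ℂ,
        tensorPowKK N k ((V : Matrix (Fin N) (Fin N) ℂ)) a b ∂μH)
    (hclose : ‖Matrix.toEuclideanCLM (𝕜 := ℂ) (G - GH)‖ ≤ lam)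
    (m : ℕ) (hm : 1 ≤ m) :
    ‖Matrix.toEuclideanCLM (𝕜 := ℂ) (G ^ m - GH)‖ ≤ lam ^ m := by
  -- basic integrability
  have hInt : ∀ a b, Integrable (fun V : Matrix.unitaryGroup (Fin N) ℂ =>
      tensorPowKK N k (V : Matrix (Fin N) (Fin N) ℂ) a b) μH := fun a b =>
    (continuous_tensorPowKK_entry N k a b).integrable_of_hasCompactSupport
      (HasCompactSupport.of_compactSpace _)
  -- right invariance
  haveI hri : μH.IsMulRightInvariant := by
    constructor
    intro g
    have : (Measure.map (· * g) μH).IsHaarMeasure := inferInstance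
    have : IsProbabilityMeasure (Measure.map (· * g) μH) :=
      Measure.isProbabilityMeasure_map ((continuous_mul_right g).measurable.aemeasurable)
    exact Measure.isHaarMeasure_eq_of_isProbabilityMeasure _ _
  -- GH * tensorPowKK W = GH
  have hGH_T : ∀ W : Matrix.unitaryGroup (Fin N) ℂ,
      GH * tensorPowKK N k (W : Matrix (Fin N) (Fin N) ℂ) = GH := by
    intro W
    ext a b
    rw [Matrix.mul_apply]
    calc ∑ c, GH a c * tensorPowKK N k (W : Matrix (Fin N) (Fin N) ℂ) c b
        = ∑ c, ∫ V : Matrix.unitaryGroup (Fin N) ℂ,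
            tensorPowKK N k (V : Matrix (Fin N) (Fin N) ℂ) a c
              * tensorPowKK N k (W : Matrix (Fin N) (Fin N) ℂ) c b ∂μH := by
          refine Finset.sum_congr rfl fun c _ => ?_
          rw [hGH, integral_mul_const]
      _ = ∫ V : Matrix.unitaryGroup (Fin N) ℂ, ∑ c,
            tensorPowKK N k (V : Matrix (Fin N) (Fin N) ℂ) a c
              * tensorPowKK N k (W : Matrix (Fin N) (Fin N) ℂ) c b ∂μH := by
          rw [integral_finset_sum]
          exact fun c _ => (hInt a c).mul_const _
      _ = ∫ V : Matrix.unitaryGroup (Fin N) ℂ,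
            tensorPowKK N k ((V * W : Matrix.unitaryGroup (Fin N) ℂ) :
              Matrix (Fin N) (Fin N) ℂ) a b ∂μH := by
          refine integral_congr_ae (Filter.Eventually.of_forall fun V => ?_)
          show _ = tensorPowKK N k ((V * W : Matrix.unitaryGroup (Fin N) ℂ) :
            Matrix (Fin N) (Fin N) ℂ) a b
          rw [MulMemClass.coe_mul, tensorPowKK_mul, Matrix.mul_apply]
      _ = ∫ V : Matrix.unitaryGroup (Fin N) ℂ,
            tensorPowKK N k (V : Matrix (Fin N) (Fin N) ℂ) a b ∂μH :=
          integral_mul_right_eq_self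
            (fun V : Matrix.unitaryGroup (Fin N) ℂ =>
              tensorPowKK N k (V : Matrix (Fin N) (Fin N) ℂ) a b) W
      _ = GH a b := (hGH a b).symm
  -- tensorPowKK W * GH = GH
  have hT_GH : ∀ W : Matrix.unitaryGroup (Fin N) ℂ,
      tensorPowKK N k (W : Matrix (Fin N) (Fin N) ℂ) * GH = GH := by
    intro W
    ext a b
    rw [Matrix.mul_apply]
    calc ∑ c, tensorPowKK N k (W : Matrix (Fin N) (Fin N) ℂ) a c * GH c b
        = ∑ c, ∫ V : Matrix.unitaryGroup (Fin N) ℂ,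
            tensorPowKK N k (W : Matrix (Fin N) (Fin N) ℂ) a c
              * tensorPowKK N k (V : Matrix (Fin N) (Fin N) ℂ) c b ∂μH := by
          refine Finset.sum_congr rfl fun c _ => ?_
          rw [hGH, integral_const_mul]
      _ = ∫ V : Matrix.unitaryGroup (Fin N) ℂ, ∑ c,
            tensorPowKK N k (W : Matrix (Fin N) (Fin N) ℂ) a c
              * tensorPowKK N k (V : Matrix (Fin N) (Fin N) ℂ) c b ∂μH := by
          rw [integral_finset_sum]
          exact fun c _ => (hInt c b).const_mul _
      _ = ∫ V : Matrix.unitaryGroup (Fin N) ℂ,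
            tensorPowKK N k ((W * V : Matrix.unitaryGroup (Fin N) ℂ) :
              Matrix (Fin N) (Fin N) ℂ) a b ∂μH := by
          refine integral_congr_ae (Filter.Eventually.of_forall fun V => ?_)
          show _ = tensorPowKK N k ((W * V : Matrix.unitaryGroup (Fin N) ℂ) :
            Matrix (Fin N) (Fin N) ℂ) a b
          rw [MulMemClass.coe_mul, tensorPowKK_mul, Matrix.mul_apply]
      _ = ∫ V : Matrix.unitaryGroup (Fin N) ℂ,
            tensorPowKK N k (V : Matrix (Fin N) (Fin N) ℂ) a b ∂μH :=
          integral_mul_left_eq_self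
            (fun V : Matrix.unitaryGroup (Fin N) ℂ =>
              tensorPowKK N k (V : Matrix (Fin N) (Fin N) ℂ) a b) W
      _ = GH a b := (hGH a b).symm
  -- GH is idempotent
  have hGH_idem : GH * GH = GH := by
    ext a b
    rw [Matrix.mul_apply]
    calc ∑ c, GH a c * GH c b
        = ∑ c, ∫ V : Matrix.unitaryGroup (Fin N) ℂ,
            tensorPowKK N k (V : Matrix (Fin N) (Fin N) ℂ) a c * GH c b ∂μH := by
          refine Finset.sum_congr rfl fun c _ => ?_
          rw [hGH, integral_mul_const]
      _ = ∫ V : Matrix.unitaryGroup (Fin N) ℂ, ∑ c,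
            tensorPowKK N k (V : Matrix (Fin N) (Fin N) ℂ) a c * GH c b ∂μH := by
          rw [integral_finset_sum]
          exact fun c _ => (hInt a c).mul_const _
      _ = ∫ _ : Matrix.unitaryGroup (Fin N) ℂ, GH a b ∂μH := by
          refine integral_congr_ae (Filter.Eventually.of_forall fun V => ?_)
          have := hT_GH V
          calc ∑ c, tensorPowKK N k (V : Matrix (Fin N) (Fin N) ℂ) a c * GH c b
              = (tensorPowKK N k (V : Matrix (Fin N) (Fin N) ℂ) * GH) a b :=
                (Matrix.mul_apply).symm
            _ = GH a b := by rw [this]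
      _ = GH a b := by simp
  -- G * GH = GH
  have hsum1 : (∑ i, (p i : ℂ)) = 1 := by
    rw [← Complex.ofReal_sum, hp1, Complex.ofReal_one]
  have hG_GH : G * GH = GH := by
    rw [hG, Finset.sum_mul]
    calc ∑ i, ((p i : ℂ) • tensorPowKK N k ((U i : Matrix (Fin N) (Fin N) ℂ))) * GH
        = ∑ i, (p i : ℂ) • GH := by
          refine Finset.sum_congr rfl fun i _ => ?_
          rw [Matrix.smul_mul, hT_GH]
      _ = GH := by rw [← Finset.sum_smul, hsum1, one_smul]
  have hGH_G : GH * G = GH := by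
    rw [hG, Finset.mul_sum]
    calc ∑ i, GH * ((p i : ℂ) • tensorPowKK N k ((U i : Matrix (Fin N) (Fin N) ℂ)))
        = ∑ i, (p i : ℂ) • GH := by
          refine Finset.sum_congr rfl fun i _ => ?_
          rw [Matrix.mul_smul, hGH_T]
      _ = GH := by rw [← Finset.sum_smul, hsum1, one_smul]
  -- G^n * GH = GH
  have hpow_GH : ∀ n : ℕ, G ^ n * GH = GH := by
    intro n
    induction n with
    | zero => simp
    | succ n ih => rw [pow_succ, mul_assoc, hG_GH, ih]
  -- (G - GH)^n = G^n - GH for n ≥ 1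
  have hkey : ∀ n : ℕ, 1 ≤ n → (G - GH) ^ n = G ^ n - GH := by
    intro n hn
    induction n with
    | zero => omega
    | succ n ih =>
      rcases Nat.eq_or_lt_of_le hn with h | h
      · simp [← h]
      · have hn1 : 1 ≤ n := by omega
        rw [pow_succ, ih hn1, sub_mul, mul_sub, mul_sub, ← pow_succ, hpow_GH, hGH_G, hGH_idem]
        abel
  -- conclude
  rw [← hkey m hm, map_pow]
  calc ‖(Matrix.toEuclideanCLM (𝕜 := ℂ) (G - GH)) ^ m‖
      ≤ ‖Matrix.toEuclideanCLM (𝕜 := ℂ) (G - GH)‖ ^ m := norm_pow_le' _ hm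
    _ ≤ lam ^ m := pow_le_pow_left₀ (norm_nonneg _) hclose m
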